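/- Let Q ⊆ ℕ² be an interval with minimal elements m₁, …, m_k listed in increasing order of first coordinate (equivalently, decreasing order of second coordinate). Then the set of elements of Q with disconnected strict downset is exactly {m₁,…,m_k} ∪ {m_i ∨ m_{i+1} : 1 ≤ i ≤ k−1}, where ∨ is the coordinatewise maximum. -/

import Mathlib

/-- A single comparability step within `S` with respect to the relation `r`. -/
def StepIn {α : Type*} (S : Set α) (r : α → α → Prop) (x y : α) : Prop :=
  x ∈ S ∧ y ∈ S ∧ (r x y ∨ r y x)

/-- Connectivity of the set `S` equipped with the relation `r`: `S` is nonempty and any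
two elements of `S` are joined by a finite zigzag of `r`-steps within `S`. -/
def ConnIn {α : Type*} (S : Set α) (r : α → α → Prop) : Prop :=
  S.Nonempty ∧ ∀ a ∈ S, ∀ b ∈ S, Relation.ReflTransGen (StepIn S r) a b

/-- Connectivity of a subset of a poset, as a subposet (zigzags of comparabilities). -/
def PosetConn {α : Type*} [LE α] (S : Set α) : Prop := ConnIn S (· ≤ ·)

/-- `a` and `b` lie in `S` in the same connected component of the subposet `S`. -/
def SameComp {α : Type*} [LE α] (S : Set α) (a b : α) : Prop :=
  a ∈ S ∧ b ∈ S ∧ Relation.ReflTransGen (StepIn S (· ≤ ·)) a b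

/-- A subset of a poset is an interval if it is connected and convex. -/
def IsIntervalSet {α : Type*} [PartialOrder α] (Q : Set α) : Prop :=
  PosetConn Q ∧ ∀ p r, p ∈ Q → r ∈ Q → ∀ x, p ≤ x → x ≤ r → x ∈ Q

/-- Let `Q ⊆ ℕ²` be an interval whose minimal elements are `m 0, …, m (k-1)`, listed in
increasing order of first coordinate.  Then the elements of `Q` with disconnected
strict downset are exactly the minimal elements together with the joins
`m i ⊔ m (i+1)` of consecutive minimal elements. -/
theorem stmt13 {k : ℕ} (Q : Set (ℕ × ℕ)) (hQ : IsIntervalSet Q)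
    (m : Fin k → ℕ × ℕ)
    (hmin : ∀ i, m i ∈ Q ∧ ∀ x ∈ Q, ¬ x < m i)
    (hall : ∀ x ∈ Q, (∀ y ∈ Q, ¬ y < x) → ∃ i, x = m i)
    (hord : StrictMono fun i => (m i).1) :
    {q | q ∈ Q ∧ ¬ PosetConn {p | p ∈ Q ∧ p < q}} =
      Set.range m ∪
        {x | ∃ (i : Fin k) (h : (i : ℕ) + 1 < k), x = m i ⊔ m ⟨(i : ℕ) + 1, h⟩} := by
  obtain ⟨hconnQ, hconv⟩ := hQ
  have hmQ : ∀ i, m i ∈ Q := fun i => (hmin i).1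
  have hnotlt : ∀ (i : Fin k), ∀ x ∈ Q, ¬ x < m i := fun i => (hmin i).2
  -- second coordinates strictly decreasing
  have hanti : StrictAnti fun i => (m i).2 := by
    intro a b hab
    have h1 : (m a).1 < (m b).1 := hord hab
    by_contra hle
    push_neg at hle
    have hle' : m a ≤ m b := Prod.le_def.mpr ⟨h1.le, hle⟩
    have hne : m a ≠ m b := fun he => absurd (congrArg Prod.fst he) (ne_of_lt h1)
    exact hnotlt b (m a) (hmQ a) (lt_of_le_of_ne hle' hne)
  -- if m c ≤ x and m b ≤ x and c between, then m between ≤ x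
  have hbetween : ∀ (a b c : Fin k), a ≤ c → c ≤ b → ∀ x : ℕ × ℕ,
      m a ≤ x → m b ≤ x → m c ≤ x := by
    intro a b c hac hcb x hax hbx
    refine Prod.le_def.mpr ⟨le_trans ?_ (Prod.le_def.mp hbx).1,
      le_trans ?_ (Prod.le_def.mp hax).2⟩
    · exact hord.monotone hcb
    · exact hanti.antitone hac
  -- every element of Q is above some minimal element
  have hminQ : ∀ p ∈ Q, ∃ j, m j ≤ p := by
    have key : ∀ n, ∀ p ∈ Q, p.1 + p.2 ≤ n → ∃ j, m j ≤ p := by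
      intro n
      induction n using Nat.strong_induction_on with
      | _ n ih =>
        intro p hp hle
        by_cases h : ∀ y ∈ Q, ¬ y < p
        · obtain ⟨i, hi⟩ := hall p hp h
          exact ⟨i, hi ▸ le_refl p⟩
        · push_neg at h
          obtain ⟨y, hy, hylt⟩ := h
          have hsum : y.1 + y.2 < p.1 + p.2 := by
            rcases Prod.lt_iff.mp hylt with ⟨h1, h2⟩ | ⟨h1, h2⟩ <;> omega
          obtain ⟨j, hj⟩ := ih (y.1 + y.2) (lt_of_lt_of_le hsum hle) y hy le_rfl
          exact ⟨j, hj.trans hylt.le⟩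
    exact fun p hp => key (p.1 + p.2) p hp le_rfl
  -- m c ≤ m i implies c = i
  have hJlei : ∀ c i : Fin k, m c ≤ m i → c = i := by
    intro c i h
    have h2 : m c = m i := by
      by_contra hne
      exact hnotlt i (m c) (hmQ c) (lt_of_le_of_ne h hne)
    exact hord.injective (congrArg Prod.fst h2)
  -- consecutive joins lie in Q
  have hjoinQ : ∀ (i : Fin k) (h : (i : ℕ) + 1 < k), m i ⊔ m ⟨(i : ℕ) + 1, h⟩ ∈ Q := by
    intro i h
    set j : Fin k := ⟨(i : ℕ) + 1, h⟩ with hj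
    have hij : i < j := by simp [Fin.lt_def, hj]
    have key : ∀ x, Relation.ReflTransGen (StepIn Q (· ≤ ·)) (m i) x →
        ((∃ z ∈ Q, m i ≤ z ∧ m j ≤ z) ∨ ∀ c, m c ≤ x → c ≤ i) := by
      intro x hx
      induction hx with
      | refl => exact Or.inr fun c hc => (hJlei c i hc) ▸ le_refl i
      | @tail b c hpath hstep ih =>
        obtain ⟨hbQ, hcQ, hbc⟩ := hstep
        rcases ih with done | hinv
        · exact Or.inl done
        rcases hbc with hbc | hcb
        · by_cases hc : ∀ c', m c' ≤ c → c' ≤ i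
          · exact Or.inr hc
          push_neg at hc
          obtain ⟨c', hc'le, hc'gt⟩ := hc
          obtain ⟨a, ha⟩ := hminQ b hbQ
          have hai : a ≤ i := hinv a ha
          have hic' : i ≤ c' := le_of_lt hc'gt
          have hjc' : j ≤ c' := by
            have := Fin.lt_def.mp hc'gt
            simp [Fin.le_def, hj]; omega
          have hmi : m i ≤ c := hbetween a c' i hai hic' c (ha.trans hbc) hc'le
          have hmj : m j ≤ c := hbetween a c' j (le_trans hai (le_of_lt hij)) hjc' c
            (ha.trans hbc) hc'le
          exact Or.inl ⟨c, hcQ, hmi, hmj⟩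
        · exact Or.inr fun c' h' => hinv c' (h'.trans hcb)
    rcases key (m j) (hconnQ.2 (m i) (hmQ i) (m j) (hmQ j)) with ⟨z, hz, h1, h2⟩ | hinv
    · exact hconv (m i) z (hmQ i) hz (m i ⊔ m j) le_sup_left (sup_le h1 h2)
    · exact absurd (hinv j le_rfl) (not_le.mpr hij)
  ext q
  simp only [Set.mem_setOf_eq, Set.mem_union, Set.mem_range]
  constructor
  · -- hard direction: disconnected downset ⇒ minimal or consecutive join
    rintro ⟨hqQ, hnc⟩
    by_contra hout
    push_neg at hout
    obtain ⟨hnr, hnj⟩ := hout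
    exfalso
    apply hnc
    set D := {p | p ∈ Q ∧ p < q} with hD
    have hmltq : ∀ c : Fin k, m c ≤ q → m c < q :=
      fun c h => lt_of_le_of_ne h (fun e => hnr c e)
    -- nonempty
    have hne : D.Nonempty := by
      by_contra h
      rw [Set.not_nonempty_iff_eq_empty] at h
      have : ∀ y ∈ Q, ¬ y < q := by
        intro y hy hlt
        have : y ∈ D := ⟨hy, hlt⟩
        simp [h] at this
      obtain ⟨i, hi⟩ := hall q hqQ this
      exact hnr i hi.symm
    -- chains between minimal elements below q
    have chain : ∀ n, ∀ (c : Fin k), m c ≤ q → ∀ (d : Fin k), m d ≤ q →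
        (d : ℕ) = (c : ℕ) + n → Relation.ReflTransGen (StepIn D (· ≤ ·)) (m c) (m d) := by
      intro n
      induction n with
      | zero =>
        intro c hc d hd hdc
        have : c = d := Fin.ext (by omega)
        subst this
        exact Relation.ReflTransGen.refl
      | succ n ih =>
        intro c hc d hd hdc
        have hlt : (c : ℕ) + 1 < k := by have := d.isLt; omega
        set c' : Fin k := ⟨(c : ℕ) + 1, hlt⟩ with hc'
        have hcc' : c ≤ c' := by simp [Fin.le_def, hc']
        have hc'd : c' ≤ d := by simp [Fin.le_def, hc']; omega
        have hmc' : m c' ≤ q := hbetween c d c' hcc' hc'd q hc hd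
        have hjQ : m c ⊔ m c' ∈ Q := hjoinQ c hlt
        have hjle : m c ⊔ m c' ≤ q := sup_le hc hmc'
        have hjlt : m c ⊔ m c' < q := lt_of_le_of_ne hjle (fun e => hnj c hlt e.symm)
        have s1 : StepIn D (· ≤ ·) (m c) (m c ⊔ m c') :=
          ⟨⟨hmQ c, hmltq c hc⟩, ⟨hjQ, hjlt⟩, Or.inl le_sup_left⟩
        have s2 : StepIn D (· ≤ ·) (m c ⊔ m c') (m c') :=
          ⟨⟨hjQ, hjlt⟩, ⟨hmQ c', hmltq c' hmc'⟩, Or.inr le_sup_right⟩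
        exact ((Relation.ReflTransGen.single s1).tail s2).trans
          (ih c' hmc' d hd (by simp [hc']; omega))
    have hsymm : Symmetric (StepIn D (· ≤ ·)) :=
      fun a b ⟨h1, h2, h3⟩ => ⟨h2, h1, h3.symm⟩
    refine ⟨hne, ?_⟩
    intro a ha b hb
    obtain ⟨ca, hca⟩ := hminQ a ha.1
    obtain ⟨cb, hcb⟩ := hminQ b hb.1
    have hcaq : m ca ≤ q := hca.trans ha.2.le
    have hcbq : m cb ≤ q := hcb.trans hb.2.le
    have hpath : Relation.ReflTransGen (StepIn D (· ≤ ·)) (m ca) (m cb) := by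
      rcases le_total ca cb with h | h
      · exact chain ((cb : ℕ) - (ca : ℕ)) ca hcaq cb hcbq (by have := Fin.le_def.mp h; omega)
      · haveI : Std.Symm (StepIn D (· ≤ ·)) := ⟨fun a b h => hsymm h⟩
        exact (Relation.ReflTransGen.stdSymm.symm _ _)
          (chain ((ca : ℕ) - (cb : ℕ)) cb hcbq ca hcaq (by have := Fin.le_def.mp h; omega))
    have s1 : Relation.ReflTransGen (StepIn D (· ≤ ·)) a (m ca) :=
      Relation.ReflTransGen.single ⟨ha, ⟨hmQ ca, hmltq ca hcaq⟩, Or.inr hca⟩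
    have s2 : Relation.ReflTransGen (StepIn D (· ≤ ·)) (m cb) b :=
      Relation.ReflTransGen.single ⟨⟨hmQ cb, hmltq cb hcbq⟩, hb, Or.inl hcb⟩
    exact (s1.trans hpath).trans s2
  · -- easy direction
    rintro (⟨i, rfl⟩ | ⟨i, h, rfl⟩)
    · refine ⟨hmQ i, ?_⟩
      rintro ⟨⟨p, hpQ, hplt⟩, -⟩
      exact hnotlt i p hpQ hplt
    · set j : Fin k := ⟨(i : ℕ) + 1, h⟩ with hj
      have hij : i < j := by simp [Fin.lt_def, hj]
      set q := m i ⊔ m j with hq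
      have hqQ : q ∈ Q := hjoinQ i h
      have hmilt : m i < q :=
        lt_of_le_of_ne le_sup_left (fun he => (Fin.lt_def.mp hij).ne
          (congrArg Fin.val (hJlei j i (he ▸ le_sup_right)).symm))
      have hmjlt : m j < q :=
        lt_of_le_of_ne le_sup_right (fun he => (Fin.lt_def.mp hij).ne
          (congrArg Fin.val (hJlei i j (he ▸ le_sup_left))))
      have hq1 : q.1 = (m j).1 := sup_eq_right.mpr (hord hij).le
      have hq2 : q.2 = (m i).2 := sup_eq_left.mpr (hanti hij).le
      have hclass : ∀ p ∈ Q, p < q → (m i ≤ p ∨ m j ≤ p) := by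
        intro p hpQ hplt
        obtain ⟨c, hc⟩ := hminQ p hpQ
        have hcq : m c ≤ q := hc.trans hplt.le
        have h1 : (c : ℕ) ≤ (i : ℕ) + 1 := by
          have : (m c).1 ≤ (m j).1 := hq1 ▸ (Prod.le_def.mp hcq).1
          exact Fin.le_def.mp (hord.le_iff_le.mp this)
        have h2 : (i : ℕ) ≤ (c : ℕ) := by
          have : (m c).2 ≤ (m i).2 := hq2 ▸ (Prod.le_def.mp hcq).2
          exact Fin.le_def.mp (hanti.le_iff_ge.mp this)
        have : c = i ∨ c = j := by
          rcases Nat.lt_or_ge (c : ℕ) ((i : ℕ) + 1) with h' | h'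
          · exact Or.inl (Fin.ext (by omega))
          · exact Or.inr (Fin.ext (show (c : ℕ) = (i : ℕ) + 1 by omega))
        rcases this with rfl | rfl
        · exact Or.inl hc
        · exact Or.inr hc
      have hnotboth : ∀ p, p < q → ¬ (m i ≤ p ∧ m j ≤ p) := by
        rintro p hplt ⟨h1, h2⟩
        exact absurd (lt_of_le_of_lt (sup_le h1 h2) hplt) (lt_irrefl q)
      refine ⟨hqQ, ?_⟩
      rintro ⟨-, hcon⟩
      set D := {p | p ∈ Q ∧ p < q} with hD
      have hmiD : m i ∈ D := ⟨hmQ i, hmilt⟩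
      have hmjD : m j ∈ D := ⟨hmQ j, hmjlt⟩
      have key : ∀ x, Relation.ReflTransGen (StepIn D (· ≤ ·)) (m i) x →
          x ∈ D ∧ m i ≤ x := by
        intro x hx
        induction hx with
        | refl => exact ⟨hmiD, le_rfl⟩
        | @tail b c hpath hstep ih =>
          obtain ⟨hbD, hcD, hbc⟩ := hstep
          refine ⟨hcD, ?_⟩
          rcases hbc with hbc | hcb
          · exact ih.2.trans hbc
          · rcases hclass c hcD.1 hcD.2 with h1 | h1
            · exact h1
            · exact absurd ⟨ih.2, h1.trans hcb⟩ (hnotboth b hbD.2)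
      have := (key (m j) (hcon (m i) hmiD (m j) hmjD)).2
      exact (Fin.lt_def.mp hij).ne (congrArg Fin.val (hJlei i j this))
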